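/- Let A be a bialgebra and M a vector space such that A ⊕ M carries a bialgebra structure for which the projection p : A ⊕ M → A is a bialgebra morphism and p is an abelian group object in the category of bialgebras over A (equivalently, the restricted multiplication M ⊗ M → M and restricted comultiplication M → M ⊗ M vanish). Then M inherits an A-bimodule structure and an A-bicomodule structure from the multiplication and comultiplication of A ⊕ M, and the left A-action on M is compatible with the left A-coaction via the bialgebra axiom on A ⊕ M (i.e., M is an A-tetramodule). -/

import Mathlib

open scoped TensorProduct

section defs

variable (k A M : Type*) [Field k] [Ring A] [Algebra k A]
  [AddCommGroup M] [Module k M]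

variable {k A M}

/-- The multiplication induced on `P ⊗ P` by a bilinear multiplication on `P`. -/
noncomputable def tensorSquareMul
    {P : Type*} [AddCommGroup P] [Module k P]
    (mul : P →ₗ[k] P →ₗ[k] P) :
    (P ⊗[k] P) →ₗ[k] (P ⊗[k] P) →ₗ[k] (P ⊗[k] P) :=
  TensorProduct.lift
    (((TensorProduct.mapBilinear (RingHom.id k) P P P P) ∘ₗ mul).compl₂ mul)

/-- The left action of `A` on `M` extracted from a multiplication on `A ⊕ M`:
`a · m := pr_M ((a,0)·(0,m))`. -/
noncomputable def leftAct
    (mul : (A × M) →ₗ[k] (A × M) →ₗ[k] (A × M)) : A →ₗ[k] M →ₗ[k] M :=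
  ((mul ∘ₗ LinearMap.inl k A M).compl₂ (LinearMap.inr k A M)).compr₂
    (LinearMap.snd k A M)

/-- The right action of `A` on `M`: `m · a := pr_M ((0,m)·(a,0))`. -/
noncomputable def rightAct
    (mul : (A × M) →ₗ[k] (A × M) →ₗ[k] (A × M)) : M →ₗ[k] A →ₗ[k] M :=
  ((mul ∘ₗ LinearMap.inr k A M).compl₂ (LinearMap.inl k A M)).compr₂
    (LinearMap.snd k A M)

/-- The left coaction of `A` on `M` extracted from a comultiplication on `A ⊕ M`. -/
noncomputable def leftCoact
    (com : (A × M) →ₗ[k] ((A × M) ⊗[k] (A × M))) : M →ₗ[k] (A ⊗[k] M) :=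
  (TensorProduct.map (LinearMap.fst k A M) (LinearMap.snd k A M)) ∘ₗ
    com ∘ₗ (LinearMap.inr k A M)

/-- The action of `A ⊗ A` on `A ⊗ M`: `(a₁ ⊗ a₂)·(b ⊗ m) = a₁b ⊗ a₂·m`. -/
noncomputable def tensorAct
    (mul : (A × M) →ₗ[k] (A × M) →ₗ[k] (A × M)) :
    (A ⊗[k] A) →ₗ[k] (A ⊗[k] M) →ₗ[k] (A ⊗[k] M) :=
  TensorProduct.lift
    (((TensorProduct.mapBilinear (RingHom.id k) A M A M) ∘ₗ (LinearMap.mul k A)).compl₂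
      (leftAct mul))

end defs

open TensorProduct LinearMap

set_option maxHeartbeats 2000000
set_option synthInstance.maxHeartbeats 200000

/-- Let `A` be a bialgebra and `M` a vector space such that `A ⊕ M`
carries a bialgebra structure for which `p : A ⊕ M → A` is a bialgebra morphism and
an abelian group object over `A` (the restricted multiplication `M ⊗ M → M` and
comultiplication `M → M ⊗ M` vanish).  Then `M` inherits an `A`-bimodule structure
and an `A`-bicomodule structure, and the left action is compatible with the left
coaction via the bialgebra axiom: `M` is an `A`-tetramodule. -/
theorem square_zero_bialgebra_extension_gives_tetramodule
    (k A M : Type*) [Field k] [CharZero k] [Ring A] [Bialgebra k A]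
    [AddCommGroup M] [Module k M]
    -- a bialgebra structure on A ⊕ M:
    (mul : (A × M) →ₗ[k] (A × M) →ₗ[k] (A × M))
    (com : (A × M) →ₗ[k] ((A × M) ⊗[k] (A × M)))
    (cou : (A × M) →ₗ[k] k)
    (h_assoc : ∀ x y z, mul (mul x y) z = mul x (mul y z))
    (h_one_l : ∀ x, mul ((1 : A), (0 : M)) x = x)
    (h_one_r : ∀ x, mul x ((1 : A), (0 : M)) = x)
    (h_coassoc : ∀ x,
      (TensorProduct.assoc k (A × M) (A × M) (A × M))
          ((LinearMap.rTensor (A × M) com) (com x)) =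
        (LinearMap.lTensor (A × M) com) (com x))
    (h_counit_l : ∀ x,
      (TensorProduct.lid k (A × M)) ((LinearMap.rTensor (A × M) cou) (com x)) = x)
    (h_counit_r : ∀ x,
      (TensorProduct.rid k (A × M)) ((LinearMap.lTensor (A × M) cou) (com x)) = x)
    -- bialgebra compatibility: com and cou are multiplicative
    (h_com_mul : ∀ x y, com (mul x y) = tensorSquareMul mul (com x) (com y))
    (h_com_one : com ((1 : A), (0 : M)) = ((1 : A), (0 : M)) ⊗ₜ[k] ((1 : A), (0 : M)))
    (h_cou_mul : ∀ x y, cou (mul x y) = cou x * cou y)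
    (h_cou_one : cou ((1 : A), (0 : M)) = 1)
    -- p = pr_A is a bialgebra morphism
    (h_p_mul : ∀ x y, (mul x y).1 = x.1 * y.1)
    (h_p_com : ∀ x,
      (TensorProduct.map (LinearMap.fst k A M) (LinearMap.fst k A M)) (com x) =
        (Coalgebra.comul : A →ₗ[k] A ⊗[k] A) x.1)
    (h_p_cou : ∀ x, cou x = (Coalgebra.counit : A →ₗ[k] k) x.1)
    -- the square-zero (abelian group object) conditions
    (h_sq_mul : ∀ m m' : M, mul ((0 : A), m) ((0 : A), m') = 0)
    (h_sq_com : ∀ m : M,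
      (TensorProduct.map (LinearMap.snd k A M) (LinearMap.snd k A M))
        (com ((0 : A), m)) = 0) :
    -- M is a unital A-bimodule
    ((∀ m : M, leftAct mul 1 m = m) ∧
     (∀ m : M, rightAct mul m 1 = m) ∧
     (∀ (a b : A) (m : M), leftAct mul (a * b) m = leftAct mul a (leftAct mul b m)) ∧
     (∀ (a b : A) (m : M), rightAct mul m (a * b) = rightAct mul (rightAct mul m a) b) ∧
     (∀ (a b : A) (m : M),
        leftAct mul a (rightAct mul m b) = rightAct mul (leftAct mul a m) b)) ∧
    -- M is a (left) A-comodule (and dually a bicomodule)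
    ((∀ m : M,
      (TensorProduct.assoc k A A M)
          ((LinearMap.rTensor M (Coalgebra.comul : A →ₗ[k] A ⊗[k] A))
            (leftCoact com m)) =
        (LinearMap.lTensor A (leftCoact com)) (leftCoact com m)) ∧
     (∀ m : M,
      (TensorProduct.lid k M)
        ((LinearMap.rTensor M (Coalgebra.counit : A →ₗ[k] k))
          (leftCoact com m)) = m)) ∧
    -- the left action and left coaction satisfy the tetramodule compatibility
    (∀ (a : A) (m : M),
      leftCoact com (leftAct mul a m) =
        tensorAct mul ((Coalgebra.comul : A →ₗ[k] A ⊗[k] A) a)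
          (leftCoact com m)) := by
  classical
  -- basic unfoldings
  have hL : ∀ (a : A) (m : M), leftAct mul a m = (mul (a, 0) (0, m)).2 := fun _ _ => rfl
  have hR : ∀ (m : M) (a : A), rightAct mul m a = (mul (0, m) (a, 0)).2 := fun _ _ => rfl
  have hlc : ∀ m : M, leftCoact com m =
      TensorProduct.map (LinearMap.fst k A M) (LinearMap.snd k A M) (com ((0 : A), m)) :=
    fun _ => rfl
  have hmul_pair : ∀ (a : A) (c : M) (y : A × M),
      mul (a, c) y = mul (a, 0) y + mul (0, c) y := by
    intro a c y
    rw [← LinearMap.add_apply, ← map_add, Prod.mk_add_mk, add_zero, zero_add]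
  have hmul_pair' : ∀ (x : A × M) (b : A) (n : M),
      mul x (b, n) = mul x (b, 0) + mul x (0, n) := by
    intro x b n
    rw [← map_add, Prod.mk_add_mk, add_zero, zero_add]
  -- Part 1: bimodule
  have h1l : ∀ m : M, leftAct mul 1 m = m := by
    intro m; rw [hL, h_one_l]
  have h1r : ∀ m : M, rightAct mul m 1 = m := by
    intro m; rw [hR, h_one_r]
  have hLL : ∀ (a b : A) (m : M),
      leftAct mul (a * b) m = leftAct mul a (leftAct mul b m) := by
    intro a b m
    have hab : mul ((a : A), (0 : M)) (b, 0) = (a * b, (mul ((a : A), (0 : M)) (b, 0)).2) :=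
      Prod.ext (h_p_mul _ _) rfl
    have hbm : mul ((b : A), (0 : M)) ((0 : A), m) = ((0 : A), leftAct mul b m) :=
      Prod.ext (by simpa using h_p_mul ((b : A), (0 : M)) ((0 : A), m)) rfl
    calc leftAct mul (a * b) m
        = (mul (a * b, 0) ((0 : A), m)).2 := rfl
      _ = (mul (a * b, (mul ((a : A), (0 : M)) (b, 0)).2) ((0 : A), m)).2 := by
          conv_rhs => rw [hmul_pair, h_sq_mul, add_zero]
      _ = (mul (mul ((a : A), (0 : M)) (b, 0)) ((0 : A), m)).2 := by rw [← hab]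
      _ = (mul ((a : A), (0 : M)) (mul (b, 0) ((0 : A), m))).2 := by rw [h_assoc]
      _ = leftAct mul a (leftAct mul b m) := by rw [hbm]; rfl
  have hRR : ∀ (a b : A) (m : M),
      rightAct mul m (a * b) = rightAct mul (rightAct mul m a) b := by
    intro a b m
    have hab : mul ((a : A), (0 : M)) (b, 0) = (a * b, (mul ((a : A), (0 : M)) (b, 0)).2) :=
      Prod.ext (h_p_mul _ _) rfl
    have hma : mul ((0 : A), m) ((a : A), (0 : M)) = ((0 : A), rightAct mul m a) :=
      Prod.ext (by simpa using h_p_mul ((0 : A), m) ((a : A), (0 : M))) rfl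
    calc rightAct mul m (a * b)
        = (mul ((0 : A), m) (a * b, 0)).2 := rfl
      _ = (mul ((0 : A), m) (a * b, (mul ((a : A), (0 : M)) (b, 0)).2)).2 := by
          conv_rhs => rw [hmul_pair', h_sq_mul, add_zero]
      _ = (mul ((0 : A), m) (mul ((a : A), (0 : M)) (b, 0))).2 := by rw [← hab]
      _ = (mul (mul ((0 : A), m) ((a : A), (0 : M))) (b, 0)).2 := by rw [h_assoc]
      _ = rightAct mul (rightAct mul m a) b := by rw [hma]; rfl
  have hLR : ∀ (a b : A) (m : M),
      leftAct mul a (rightAct mul m b) = rightAct mul (leftAct mul a m) b := by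
    intro a b m
    have hmb : mul ((0 : A), m) ((b : A), (0 : M)) = ((0 : A), rightAct mul m b) :=
      Prod.ext (by simpa using h_p_mul ((0 : A), m) ((b : A), (0 : M))) rfl
    have ham : mul ((a : A), (0 : M)) ((0 : A), m) = ((0 : A), leftAct mul a m) :=
      Prod.ext (by simpa using h_p_mul ((a : A), (0 : M)) ((0 : A), m)) rfl
    calc leftAct mul a (rightAct mul m b)
        = (mul ((a : A), (0 : M)) ((0 : A), rightAct mul m b)).2 := rfl
      _ = (mul ((a : A), (0 : M)) (mul ((0 : A), m) ((b : A), (0 : M)))).2 := by rw [hmb]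
      _ = (mul (mul ((a : A), (0 : M)) ((0 : A), m)) ((b : A), (0 : M))).2 := by rw [h_assoc]
      _ = rightAct mul (leftAct mul a m) b := by rw [ham]; rfl
  -- decomposition of com (0, m)
  have hdecomp : ∀ m : M, com ((0 : A), m) =
      TensorProduct.map (LinearMap.inl k A M) (LinearMap.inr k A M) (leftCoact com m) +
      TensorProduct.map (LinearMap.inr k A M) (LinearMap.inl k A M)
        (TensorProduct.map (LinearMap.snd k A M) (LinearMap.fst k A M) (com ((0 : A), m))) := by
    intro m
    have hid : (LinearMap.inl k A M ∘ₗ LinearMap.fst k A M) +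
        (LinearMap.inr k A M ∘ₗ LinearMap.snd k A M) = LinearMap.id := by
      ext x <;> simp
    have hff : TensorProduct.map (LinearMap.fst k A M) (LinearMap.fst k A M)
        (com ((0 : A), m)) = 0 := by
      rw [h_p_com]; simp
    have h0 : com ((0 : A), m) =
        TensorProduct.map
          ((LinearMap.inl k A M ∘ₗ LinearMap.fst k A M) +
            (LinearMap.inr k A M ∘ₗ LinearMap.snd k A M))
          ((LinearMap.inl k A M ∘ₗ LinearMap.fst k A M) +
            (LinearMap.inr k A M ∘ₗ LinearMap.snd k A M)) (com ((0 : A), m)) := by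
      rw [hid, TensorProduct.map_id]; rfl
    rw [hlc]
    conv_lhs => rw [h0]
    rw [TensorProduct.map_add_left, TensorProduct.map_add_right,
      TensorProduct.map_add_right, LinearMap.add_apply, LinearMap.add_apply,
      LinearMap.add_apply, TensorProduct.map_comp, TensorProduct.map_comp,
      TensorProduct.map_comp, TensorProduct.map_comp, LinearMap.comp_apply,
      LinearMap.comp_apply, LinearMap.comp_apply, LinearMap.comp_apply,
      hff, h_sq_com, map_zero, map_zero]
    abel
  -- coassociativity helpers
  have hC1' : ∀ (t : (A × M) ⊗[k] (A × M)) (w : A × M),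
      TensorProduct.map (LinearMap.fst k A M)
        (TensorProduct.map (LinearMap.fst k A M) (LinearMap.snd k A M))
        ((TensorProduct.assoc k (A × M) (A × M) (A × M)) (t ⊗ₜ[k] w)) =
      (TensorProduct.assoc k A A M)
        ((TensorProduct.map (LinearMap.fst k A M) (LinearMap.fst k A M) t) ⊗ₜ[k] w.2) := by
    intro t w
    induction t using TensorProduct.induction_on with
    | zero => simp
    | tmul x y => simp
    | add t₁ t₂ h₁ h₂ => simp [add_tmul, h₁, h₂]
  have hC1 : ∀ u : A ⊗[k] M,
      TensorProduct.map (LinearMap.fst k A M)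
        (TensorProduct.map (LinearMap.fst k A M) (LinearMap.snd k A M))
        ((TensorProduct.assoc k (A × M) (A × M) (A × M))
          ((LinearMap.rTensor (A × M) com)
            (TensorProduct.map (LinearMap.inl k A M) (LinearMap.inr k A M) u))) =
      (TensorProduct.assoc k A A M)
        ((LinearMap.rTensor M (Coalgebra.comul : A →ₗ[k] A ⊗[k] A)) u) := by
    intro u
    induction u using TensorProduct.induction_on with
    | zero => simp
    | tmul a n =>
      simp only [TensorProduct.map_tmul, LinearMap.rTensor_tmul, LinearMap.coe_inl,
        LinearMap.coe_inr]
      rw [hC1']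
      have := h_p_com ((a : A), (0 : M))
      simp only [LinearMap.fst_apply] at this ⊢
      rw [this]
    | add u₁ u₂ h₁ h₂ => simp only [map_add, h₁, h₂]
  have hC2 : ∀ v : M ⊗[k] A,
      TensorProduct.map (LinearMap.fst k A M)
        (TensorProduct.map (LinearMap.fst k A M) (LinearMap.snd k A M))
        ((TensorProduct.assoc k (A × M) (A × M) (A × M))
          ((LinearMap.rTensor (A × M) com)
            (TensorProduct.map (LinearMap.inr k A M) (LinearMap.inl k A M) v))) = 0 := by
    intro v
    induction v using TensorProduct.induction_on with
    | zero => simp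
    | tmul n b =>
      simp only [TensorProduct.map_tmul, LinearMap.rTensor_tmul, LinearMap.coe_inl,
        LinearMap.coe_inr]
      rw [hC1']
      have := h_p_com ((0 : A), n)
      simp only [LinearMap.fst_apply] at this
      rw [this]
      simp
    | add v₁ v₂ h₁ h₂ => simp only [map_add, h₁, h₂, add_zero]
  have hC3 : ∀ u : A ⊗[k] M,
      TensorProduct.map (LinearMap.fst k A M)
        (TensorProduct.map (LinearMap.fst k A M) (LinearMap.snd k A M))
        ((LinearMap.lTensor (A × M) com)
          (TensorProduct.map (LinearMap.inl k A M) (LinearMap.inr k A M) u)) =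
      (LinearMap.lTensor A (leftCoact com)) u := by
    intro u
    induction u using TensorProduct.induction_on with
    | zero => simp
    | tmul a n =>
      simp only [TensorProduct.map_tmul, LinearMap.lTensor_tmul, LinearMap.coe_inl,
        LinearMap.coe_inr, LinearMap.fst_apply]
      rw [hlc]
    | add u₁ u₂ h₁ h₂ => simp only [map_add, h₁, h₂]
  have hC4 : ∀ v : M ⊗[k] A,
      TensorProduct.map (LinearMap.fst k A M)
        (TensorProduct.map (LinearMap.fst k A M) (LinearMap.snd k A M))
        ((LinearMap.lTensor (A × M) com)
          (TensorProduct.map (LinearMap.inr k A M) (LinearMap.inl k A M) v)) = 0 := by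
    intro v
    induction v using TensorProduct.induction_on with
    | zero => simp
    | tmul n b =>
      simp only [TensorProduct.map_tmul, LinearMap.lTensor_tmul, LinearMap.coe_inl,
        LinearMap.coe_inr, LinearMap.fst_apply]
      simp
    | add v₁ v₂ h₁ h₂ => simp only [map_add, h₁, h₂, add_zero]
  have hcoassoc : ∀ m : M,
      (TensorProduct.assoc k A A M)
          ((LinearMap.rTensor M (Coalgebra.comul : A →ₗ[k] A ⊗[k] A))
            (leftCoact com m)) =
        (LinearMap.lTensor A (leftCoact com)) (leftCoact com m) := by
    intro m
    have e := congrArg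
      (TensorProduct.map (LinearMap.fst k A M)
        (TensorProduct.map (LinearMap.fst k A M) (LinearMap.snd k A M)))
      (h_coassoc ((0 : A), m))
    rw [hdecomp m] at e
    simp only [map_add] at e
    rw [hC1, hC2, hC3, hC4, add_zero, add_zero] at e
    exact e
  -- counit
  have hcounit : ∀ m : M,
      (TensorProduct.lid k M)
        ((LinearMap.rTensor M (Coalgebra.counit : A →ₗ[k] k))
          (leftCoact com m)) = m := by
    intro m
    have hD1 : ∀ u : A ⊗[k] M,
        (LinearMap.snd k A M)
          ((TensorProduct.lid k (A × M))
            ((LinearMap.rTensor (A × M) cou)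
              (TensorProduct.map (LinearMap.inl k A M) (LinearMap.inr k A M) u))) =
        (TensorProduct.lid k M)
          ((LinearMap.rTensor M (Coalgebra.counit : A →ₗ[k] k)) u) := by
      intro u
      induction u using TensorProduct.induction_on with
      | zero => simp
      | tmul a n =>
        simp only [TensorProduct.map_tmul, LinearMap.rTensor_tmul, LinearMap.coe_inl,
          LinearMap.coe_inr, TensorProduct.lid_tmul, map_smul, LinearMap.snd_apply]
        rw [h_p_cou]
      | add u₁ u₂ h₁ h₂ => simp only [map_add, h₁, h₂]
    have hD2 : ∀ v : M ⊗[k] A,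
        (LinearMap.snd k A M)
          ((TensorProduct.lid k (A × M))
            ((LinearMap.rTensor (A × M) cou)
              (TensorProduct.map (LinearMap.inr k A M) (LinearMap.inl k A M) v))) = 0 := by
      intro v
      induction v using TensorProduct.induction_on with
      | zero => simp
      | tmul n b =>
        simp [TensorProduct.lid_tmul]
      | add v₁ v₂ h₁ h₂ => simp only [map_add, h₁, h₂, add_zero]
    have e := congrArg (LinearMap.snd k A M) (h_counit_l ((0 : A), m))
    rw [hdecomp m] at e
    simp only [map_add] at e
    rw [hD1, hD2, add_zero] at e
    exact e
  -- tetramodule compatibility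
  have hE1 : ∀ (t : (A × M) ⊗[k] (A × M)) (u : A ⊗[k] M),
      TensorProduct.map (LinearMap.fst k A M) (LinearMap.snd k A M)
        (tensorSquareMul mul t
          (TensorProduct.map (LinearMap.inl k A M) (LinearMap.inr k A M) u)) =
      tensorAct mul
        (TensorProduct.map (LinearMap.fst k A M) (LinearMap.fst k A M) t) u := by
    intro t u
    induction t using TensorProduct.induction_on with
    | zero => simp
    | tmul x y =>
      induction u using TensorProduct.induction_on with
      | zero => simp
      | tmul b n =>
        have hy2 : (mul y ((0 : A), n)).2 = (mul (y.1, (0 : M)) ((0 : A), n)).2 := by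
          conv_lhs => rw [← Prod.mk.eta (p := y)]
          rw [hmul_pair, h_sq_mul]
          simp
        simp only [tensorSquareMul, tensorAct, TensorProduct.map_tmul,
          TensorProduct.lift.tmul, LinearMap.compl₂_apply, LinearMap.comp_apply,
          TensorProduct.mapBilinear_apply, LinearMap.coe_inl, LinearMap.coe_inr,
          LinearMap.fst_apply, LinearMap.snd_apply, LinearMap.mul_apply']
        rw [hy2, h_p_mul]
        rfl
      | add u₁ u₂ h₁ h₂ => simp only [map_add, h₁, h₂]
    | add t₁ t₂ h₁ h₂ =>
      simp only [map_add, LinearMap.add_apply, h₁, h₂]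
  have hE2 : ∀ (t : (A × M) ⊗[k] (A × M)) (v : M ⊗[k] A),
      TensorProduct.map (LinearMap.fst k A M) (LinearMap.snd k A M)
        (tensorSquareMul mul t
          (TensorProduct.map (LinearMap.inr k A M) (LinearMap.inl k A M) v)) = 0 := by
    intro t v
    induction t using TensorProduct.induction_on with
    | zero => simp
    | tmul x y =>
      induction v using TensorProduct.induction_on with
      | zero => simp
      | tmul n b =>
        simp only [tensorSquareMul, TensorProduct.map_tmul,
          TensorProduct.lift.tmul, LinearMap.compl₂_apply, LinearMap.comp_apply,
          TensorProduct.mapBilinear_apply, LinearMap.coe_inl, LinearMap.coe_inr,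
          LinearMap.fst_apply]
        rw [h_p_mul]
        simp
      | add v₁ v₂ h₁ h₂ => simp only [map_add, h₁, h₂, add_zero]
    | add t₁ t₂ h₁ h₂ =>
      simp only [map_add, LinearMap.add_apply, h₁, h₂, add_zero]
  have htetra : ∀ (a : A) (m : M),
      leftCoact com (leftAct mul a m) =
        tensorAct mul ((Coalgebra.comul : A →ₗ[k] A ⊗[k] A) a)
          (leftCoact com m) := by
    intro a m
    have ham : mul ((a : A), (0 : M)) ((0 : A), m) = ((0 : A), leftAct mul a m) :=
      Prod.ext (by simpa using h_p_mul ((a : A), (0 : M)) ((0 : A), m)) rfl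
    rw [hlc, ← ham, h_com_mul, hdecomp m]
    simp only [map_add]
    rw [hE1, hE2, add_zero]
    have := h_p_com ((a : A), (0 : M))
    simp only [LinearMap.fst_apply] at this
    rw [this]
  exact ⟨⟨h1l, h1r, hLL, hRR, hLR⟩, ⟨hcoassoc, hcounit⟩, htetra⟩
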